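/- Let L = L₁ × ℝⁿ where L₁ is a locally compact abelian group containing a compact open subgroup. A continuous endomorphism φ of L, written in matrix form (α β; γ δ) with α ∈ End(L₁), β ∈ Hom(ℝⁿ, L₁), γ ∈ Hom(L₁, ℝⁿ), δ ∈ End(ℝⁿ), is a topological automorphism of L if and only if α is a topological automorphism of L₁ and δ is a linear automorphism of ℝⁿ. -/

import Mathlib

lemma zero_comp {L₁ : Type*} [AddCommGroup L₁] [TopologicalSpace L₁] [IsTopologicalAddGroup L₁]
    (U : AddSubgroup L₁) (hUc : IsCompact (U : Set L₁)) (hUo : IsOpen (U : Set L₁))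
    {n : ℕ} (b : (Fin n → ℝ) →+ L₁) (hb : Continuous ⇑b)
    (c : L₁ →+ (Fin n → ℝ)) (hc : Continuous ⇑c) (v : Fin n → ℝ) :
    c (b v) = 0 := by
  have hUcl : IsClosed (U : Set L₁) := AddSubgroup.isClosed_of_isOpen U hUo
  have hrange : Set.range ⇑b ⊆ (U : Set L₁) := by
    apply IsPreconnected.subset_isClopen (isPreconnected_range hb) ⟨hUcl, hUo⟩
    exact ⟨0, ⟨0, map_zero b⟩, U.zero_mem⟩
  obtain ⟨R, hR⟩ := (isBounded_iff_forall_norm_le).1 (hUc.image hc).isBounded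
  have key : ∀ k : ℕ, (k : ℝ) * ‖c (b v)‖ ≤ R := by
    intro k
    have h1 : c (b (k • v)) ∈ ⇑c '' (U : Set L₁) :=
      ⟨b (k • v), hrange ⟨k • v, rfl⟩, rfl⟩
    have h2 : c (b (k • v)) = (k : ℝ) • c (b v) := by
      rw [map_nsmul, map_nsmul, ← Nat.cast_smul_eq_nsmul ℝ]
    have := hR _ h1
    rw [h2, norm_smul] at this
    simpa using this
  by_contra h
  have hpos : 0 < ‖c (b v)‖ := norm_pos_iff.2 h
  obtain ⟨k, hk⟩ := exists_nat_gt (R / ‖c (b v)‖)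
  have := key k
  rw [div_lt_iff₀ hpos] at hk
  linarith

/-- `f : M → M` is a topological automorphism: a group automorphism that is a
homeomorphism. -/
def IsTopAut {M : Type*} [AddCommGroup M] [TopologicalSpace M] (f : M → M) : Prop :=
  ∃ e : M ≃+ M, ⇑e = f ∧ Continuous ⇑e ∧ Continuous ⇑e.symm

/-- Let `L = L₁ × ℝⁿ` with `L₁` a locally compact abelian group containing a compact open
subgroup. A continuous endomorphism `φ` of `L` with matrix form `(α β; γ δ)`, i.e.
`φ(x, v) = (α x + β v, γ x + δ v)`, is a topological automorphism of `L` if and only if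
`α` is a topological automorphism of `L₁` and `δ` is an automorphism of `ℝⁿ`. -/
theorem stmt_13 {L₁ : Type*} [AddCommGroup L₁] [TopologicalSpace L₁] [IsTopologicalAddGroup L₁]
    [T2Space L₁] [LocallyCompactSpace L₁]
    (U : AddSubgroup L₁) (hUc : IsCompact (U : Set L₁)) (hUo : IsOpen (U : Set L₁))
    (n : ℕ)
    (α : L₁ →+ L₁) (hα : Continuous ⇑α)
    (β : (Fin n → ℝ) →+ L₁) (hβ : Continuous ⇑β)
    (γ : L₁ →+ (Fin n → ℝ)) (hγ : Continuous ⇑γ)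
    (δ : (Fin n → ℝ) →+ (Fin n → ℝ)) (hδ : Continuous ⇑δ) :
    IsTopAut (fun p : L₁ × (Fin n → ℝ) => (α p.1 + β p.2, γ p.1 + δ p.2)) ↔
      (IsTopAut ⇑α ∧ Function.Bijective ⇑δ) := by
  constructor
  · rintro ⟨e, he, hec, hec'⟩
    have hψc : Continuous ⇑e.symm := hec'
    -- matrix components of the inverse
    set a : L₁ →+ L₁ :=
      ((AddMonoidHom.fst L₁ (Fin n → ℝ)).comp e.symm.toAddMonoidHom).comp
        (AddMonoidHom.inl L₁ (Fin n → ℝ)) with ha_def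
    set b : (Fin n → ℝ) →+ L₁ :=
      ((AddMonoidHom.fst L₁ (Fin n → ℝ)).comp e.symm.toAddMonoidHom).comp
        (AddMonoidHom.inr L₁ (Fin n → ℝ)) with hb_def
    set c : L₁ →+ (Fin n → ℝ) :=
      ((AddMonoidHom.snd L₁ (Fin n → ℝ)).comp e.symm.toAddMonoidHom).comp
        (AddMonoidHom.inl L₁ (Fin n → ℝ)) with hc_def
    set d : (Fin n → ℝ) →+ (Fin n → ℝ) :=
      ((AddMonoidHom.snd L₁ (Fin n → ℝ)).comp e.symm.toAddMonoidHom).comp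
        (AddMonoidHom.inr L₁ (Fin n → ℝ)) with hd_def
    have hac : Continuous ⇑a := by
      simp only [ha_def, AddMonoidHom.coe_comp]
      exact continuous_fst.comp (hψc.comp (continuous_id.prodMk continuous_const))
    have hbc : Continuous ⇑b := by
      simp only [hb_def, AddMonoidHom.coe_comp]
      exact continuous_fst.comp (hψc.comp (continuous_const.prodMk continuous_id))
    have hcc : Continuous ⇑c := by
      simp only [hc_def, AddMonoidHom.coe_comp]
      exact continuous_snd.comp (hψc.comp (continuous_id.prodMk continuous_const))
    have hψ_eq : ∀ (y : L₁) (w : Fin n → ℝ), e.symm (y, w) = (a y + b w, c y + d w) := by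
      intro y w
      have h0 : (y, w) = ((y, 0) : L₁ × (Fin n → ℝ)) + (0, w) := by simp
      rw [h0, map_add]
      rfl
    -- pointwise equations
    have hψφ : ∀ p : L₁ × (Fin n → ℝ), e.symm (α p.1 + β p.2, γ p.1 + δ p.2) = p := by
      intro p
      have : (α p.1 + β p.2, γ p.1 + δ p.2) = e p := by rw [he]
      rw [this, e.symm_apply_apply]
    have hφψ : ∀ p : L₁ × (Fin n → ℝ),
        (α (e.symm p).1 + β (e.symm p).2, γ (e.symm p).1 + δ (e.symm p).2) = p := by
      intro p
      have := congrFun he (e.symm p)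
      simpa [e.apply_symm_apply] using this.symm
    have E12 : ∀ x : L₁, a (α x) + b (γ x) = x ∧ c (α x) + d (γ x) = 0 := by
      intro x
      have := hψφ (x, 0)
      simp only [map_zero, add_zero] at this
      rw [hψ_eq] at this
      exact ⟨congrArg Prod.fst this, congrArg Prod.snd this⟩
    have E34 : ∀ v : Fin n → ℝ, a (β v) + b (δ v) = 0 ∧ c (β v) + d (δ v) = v := by
      intro v
      have := hψφ (0, v)
      simp only [map_zero, zero_add] at this
      rw [hψ_eq] at this
      exact ⟨congrArg Prod.fst this, congrArg Prod.snd this⟩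
    have E56 : ∀ y : L₁, α (a y) + β (c y) = y ∧ γ (a y) + δ (c y) = 0 := by
      intro y
      have := hφψ (y, 0)
      rw [hψ_eq] at this
      simp only [map_zero, add_zero] at this
      exact ⟨congrArg Prod.fst this, congrArg Prod.snd this⟩
    have E78 : ∀ w : Fin n → ℝ, α (b w) + β (d w) = 0 ∧ γ (b w) + δ (d w) = w := by
      intro w
      have := hφψ (0, w)
      rw [hψ_eq] at this
      simp only [map_zero, zero_add] at this
      exact ⟨congrArg Prod.fst this, congrArg Prod.snd this⟩
    -- zero compositions
    have hcβ : ∀ v, c (β v) = 0 := zero_comp U hUc hUo β hβ c hcc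
    have hγb : ∀ w, γ (b w) = 0 := zero_comp U hUc hUo b hbc γ hγ
    have hcb : ∀ w, c (b w) = 0 := zero_comp U hUc hUo b hbc c hcc
    have hγβ : ∀ v, γ (β v) = 0 := zero_comp U hUc hUo β hβ γ hγ
    -- δ is bijective with inverse d
    have hdδ : ∀ v, d (δ v) = v := by
      intro v; have := (E34 v).2; rwa [hcβ v, zero_add] at this
    have hδd : ∀ w, δ (d w) = w := by
      intro w; have := (E78 w).2; rwa [hγb w, zero_add] at this
    have hδbij : Function.Bijective ⇑δ :=
      Function.bijective_iff_has_inverse.2 ⟨⇑d, hdδ, hδd⟩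
    -- α is a topological automorphism with inverse L y = a y + b (γ (a y))
    have haα : ∀ x, a (α x) = x - b (γ x) := by
      intro x; have := (E12 x).1; linear_combination (norm := abel) this
    have hαa : ∀ y, α (a y) = y - β (c y) := by
      intro y; have := (E56 y).1; linear_combination (norm := abel) this
    set Lf : L₁ → L₁ := fun y => a y + b (γ (a y)) with hLf_def
    set Rf : L₁ → L₁ := fun y => a (y + β (c y)) with hRf_def
    have hL : ∀ x, Lf (α x) = x := by
      intro x
      simp only [hLf_def, haα x, map_sub, hγb, sub_zero]
      abel
    have hR : ∀ y, α (Rf y) = y := by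
      intro y
      simp only [hRf_def, map_add, hαa, hcβ, map_zero, sub_zero]
      abel
    have hLR : ∀ y, Lf y = Rf y := by
      intro y
      conv_lhs => rw [← hR y, hL]
    have hαL : ∀ y, α (Lf y) = y := by intro y; rw [hLR, hR]
    have hLfc : Continuous Lf := hac.add (hbc.comp (hγ.comp hac))
    exact ⟨⟨{ toFun := ⇑α
              invFun := Lf
              left_inv := hL
              right_inv := hαL
              map_add' := map_add α }, rfl, hα, hLfc⟩, hδbij⟩
  · rintro ⟨⟨e₁, he₁, he₁c, he₁c'⟩, hδbij⟩
    have hαα' : ∀ y, α (e₁.symm y) = y := by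
      intro y; rw [← he₁]; exact e₁.apply_symm_apply y
    have hα'α : ∀ x, e₁.symm (α x) = x := by
      intro x; rw [← he₁]; exact e₁.symm_apply_apply x
    -- δ as a linear equivalence
    set Dl : (Fin n → ℝ) →ₗ[ℝ] (Fin n → ℝ) := (AddMonoidHom.toRealLinearMap δ hδ).toLinearMap with hDl
    have hDl_coe : ⇑Dl = ⇑δ := rfl
    set De : (Fin n → ℝ) ≃ₗ[ℝ] (Fin n → ℝ) :=
      LinearEquiv.ofBijective Dl (hDl_coe ▸ hδbij) with hDe
    have hDe_coe : ∀ v, De v = δ v := fun v => rfl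
    have hδ'c : Continuous ⇑De.symm :=
      LinearMap.continuous_of_finiteDimensional (De.symm : (Fin n → ℝ) →ₗ[ℝ] (Fin n → ℝ))
    have hδδ' : ∀ w, δ (De.symm w) = w := by
      intro w; rw [← hDe_coe]; exact De.apply_symm_apply w
    have hδ'δ : ∀ v, De.symm (δ v) = v := by
      intro v; rw [← hDe_coe]; exact De.symm_apply_apply v
    -- zero compositions
    have hγβ : ∀ v, γ (β v) = 0 := zero_comp U hUc hUo β hβ γ hγ
    have hγα'β : ∀ v, γ (e₁.symm (β v)) = 0 := by
      have := zero_comp U hUc hUo (e₁.symm.toAddMonoidHom.comp β) (he₁c'.comp hβ) γ hγ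
      simpa using this
    set Ψ : L₁ × (Fin n → ℝ) → L₁ × (Fin n → ℝ) := fun p =>
      (e₁.symm p.1 - e₁.symm (β (De.symm p.2)) + e₁.symm (β (De.symm (γ (e₁.symm p.1)))),
        De.symm p.2 - De.symm (γ (e₁.symm p.1))) with hΨ_def
    have hleft : ∀ p : L₁ × (Fin n → ℝ), Ψ (α p.1 + β p.2, γ p.1 + δ p.2) = p := by
      rintro ⟨x, v⟩
      have h1 : e₁.symm (α x + β v) = x + e₁.symm (β v) := by
        rw [map_add, hα'α]
      have h2 : γ (e₁.symm (α x + β v)) = γ x := by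
        rw [h1, map_add, hγα'β, add_zero]
      simp only [hΨ_def, h1, h2, map_add, hδ'δ, hγα'β, map_zero, add_zero,
        Prod.mk.injEq]
      constructor <;> abel
    have hright : ∀ p : L₁ × (Fin n → ℝ),
        (α (Ψ p).1 + β (Ψ p).2, γ (Ψ p).1 + δ (Ψ p).2) = p := by
      rintro ⟨y, w⟩
      simp only [hΨ_def, Prod.mk.injEq]
      constructor
      · simp only [map_add, map_sub, hαα', hδδ']
        abel
      · simp only [map_add, map_sub, hγα'β, hδδ', map_zero]
        abel
    have hadd : ∀ p q : L₁ × (Fin n → ℝ),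
        ((α (p + q).1 + β (p + q).2, γ (p + q).1 + δ (p + q).2) : L₁ × (Fin n → ℝ)) =
          (α p.1 + β p.2, γ p.1 + δ p.2) + (α q.1 + β q.2, γ q.1 + δ q.2) := by
      rintro ⟨x, v⟩ ⟨x', v'⟩
      simp only [map_add, Prod.mk_add_mk, Prod.fst_add, Prod.snd_add, Prod.mk.injEq]
      constructor <;> abel
    have hφc : Continuous fun p : L₁ × (Fin n → ℝ) => (α p.1 + β p.2, γ p.1 + δ p.2) :=
      ((hα.comp continuous_fst).add (hβ.comp continuous_snd)).prodMk
        ((hγ.comp continuous_fst).add (hδ.comp continuous_snd))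
    have hΨc : Continuous Ψ := by
      simp only [hΨ_def]
      have h1 : Continuous fun p : L₁ × (Fin n → ℝ) => e₁.symm p.1 :=
        he₁c'.comp continuous_fst
      exact (((he₁c'.comp continuous_fst).sub
          (he₁c'.comp (hβ.comp (hδ'c.comp continuous_snd)))).add
          (he₁c'.comp (hβ.comp (hδ'c.comp (hγ.comp h1))))).prodMk
        ((hδ'c.comp continuous_snd).sub (hδ'c.comp (hγ.comp h1)))
    exact ⟨{ toFun := fun p : L₁ × (Fin n → ℝ) => (α p.1 + β p.2, γ p.1 + δ p.2)
             invFun := Ψ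
             left_inv := hleft
             right_inv := hright
             map_add' := hadd }, rfl, hφc, hΨc⟩
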